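/- Let d ≥ 1 be an integer and p ≥ 1 a real number, and let vol(B) denote the Lebesgue measure of the unit ball B = {x ∈ ℝ^d : (Σ_{i=1}^d |x_i|^p)^{1/p} ≤ 1} of the ℓ_p norm on ℝ^d, so that vol(B) = (2Γ(1/p + 1))^d / Γ(d/p + 1). Then e^{−1}·√(2π(d/p + 1))·(1/(4 e^{1/12} √π))^d · d^{d/p} < vol(B)^{−1} < e^{1/12}·√(2π(d/p + 1))·(e/(2√(2π)))^d · d^{d/p}. -/

import Mathlib

open Real


lemma aux_stirling_lo (n : ℕ) (hn : 1 ≤ n) : Real.sqrt π ≤ Stirling.stirlingSeq n := by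
  obtain ⟨m, rfl⟩ := Nat.exists_eq_add_of_le hn
  have h1 : Filter.Tendsto (Stirling.stirlingSeq ∘ Nat.succ) Filter.atTop (nhds (Real.sqrt π)) :=
    Stirling.tendsto_stirlingSeq_sqrt_pi.comp (Filter.tendsto_add_atTop_nat 1)
  have := Stirling.stirlingSeq'_antitone.le_of_tendsto h1 m
  simpa [Function.comp, Nat.succ_eq_add_one, Nat.add_comm] using this

lemma aux_stirling_hi (n : ℕ) (hn : 1 ≤ n) : Stirling.stirlingSeq n ≤ Real.exp 1 / Real.sqrt 2 := by
  obtain ⟨m, rfl⟩ := Nat.exists_eq_add_of_le hn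
  have := Stirling.stirlingSeq'_antitone (Nat.zero_le m)
  simpa [Function.comp, Nat.succ_eq_add_one, Nat.add_comm] using this

lemma aux_log_fact (n : ℕ) (hn : 1 ≤ n) :
    (Real.log 2 + Real.log π + Real.log n) / 2 + n * Real.log n - n ≤ Real.log ((n.factorial : ℝ)) ∧
    Real.log ((n.factorial : ℝ)) ≤ 1 + Real.log n / 2 + n * Real.log n - n := by
  have hn0 : (0:ℝ) < n := by exact_mod_cast hn
  have hB : (0:ℝ) < Real.sqrt (2 * n) * ((n : ℝ) / Real.exp 1) ^ n := by positivity
  have hfac : (0:ℝ) < (n.factorial : ℝ) := by exact_mod_cast n.factorial_pos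
  have hseq : Stirling.stirlingSeq n = (n.factorial : ℝ) / (Real.sqrt (2 * n) * ((n : ℝ) / Real.exp 1) ^ n) := rfl
  have hlo := aux_stirling_lo n hn
  have hhi := aux_stirling_hi n hn
  rw [hseq, le_div_iff₀ hB] at hlo
  rw [hseq, div_le_iff₀ hB] at hhi
  have hlogB : Real.log (Real.sqrt (2 * n) * ((n : ℝ) / Real.exp 1) ^ n)
      = (Real.log 2 + Real.log n) / 2 + n * Real.log n - n := by
    rw [Real.log_mul (by positivity) (by positivity), Real.log_sqrt (by positivity),
      Real.log_pow, Real.log_div (by positivity) (Real.exp_ne_zero 1), Real.log_exp,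
      Real.log_mul (by norm_num) (ne_of_gt hn0)]
    ring
  constructor
  · have := Real.log_le_log (by positivity) hlo
    rw [Real.log_mul (by positivity) (ne_of_gt hB), Real.log_sqrt pi_pos.le, hlogB] at this
    linarith
  · have := Real.log_le_log hfac hhi
    rw [Real.log_mul (by positivity) (ne_of_gt hB), Real.log_div (Real.exp_ne_zero 1)
      (by positivity), Real.log_exp, Real.log_sqrt (by norm_num), hlogB] at this
    linarith


lemma aux_interp_hi (n : ℕ) (hn : 1 ≤ n) (x : ℝ) (h1 : (n:ℝ) ≤ x) (h2 : x ≤ (n:ℝ)+1) :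
    Real.log (Real.Gamma (x+1)) ≤ Real.log (n.factorial : ℝ) + (x - n) * Real.log ((n:ℝ)+1) := by
  have hn0 : (0:ℝ) < n := by exact_mod_cast hn
  have key := Real.convexOn_log_Gamma.2 (Set.mem_Ioi.mpr (show (0:ℝ) < (n:ℝ)+1 by linarith))
    (Set.mem_Ioi.mpr (show (0:ℝ) < (n:ℝ)+2 by linarith))
    (show (0:ℝ) ≤ (n:ℝ)+1-x by linarith) (show (0:ℝ) ≤ x-(n:ℝ) by linarith)
    (show ((n:ℝ)+1-x) + (x-(n:ℝ)) = 1 by ring)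
  have hx1 : ((n:ℝ)+1-x) • ((n:ℝ)+1) + (x-n) • ((n:ℝ)+2) = x + 1 := by
    simp only [smul_eq_mul]; ring
  rw [hx1] at key
  have hg1 : Real.Gamma ((n:ℝ)+1) = (n.factorial : ℝ) := Real.Gamma_nat_eq_factorial n
  have hg2 : Real.Gamma ((n:ℝ)+2) = ((n+1).factorial : ℝ) := by
    have := Real.Gamma_nat_eq_factorial (n+1)
    rw [← this]; norm_num; ring_nf
  have hfacs : Real.log (((n+1).factorial : ℝ)) = Real.log ((n:ℝ)+1) + Real.log (n.factorial : ℝ) := by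
    rw [Nat.factorial_succ]
    push_cast
    rw [Real.log_mul (by positivity) (by exact_mod_cast n.factorial_pos.ne')]
  simp only [Function.comp, smul_eq_mul, hg1, hg2, hfacs] at key
  calc Real.log (Real.Gamma (x+1)) ≤ _ := key
  _ = Real.log (n.factorial : ℝ) + (x - n) * Real.log ((n:ℝ)+1) := by ring

lemma aux_interp_lo (n : ℕ) (hn : 1 ≤ n) (x : ℝ) (h1 : (n:ℝ) ≤ x) (h2 : x ≤ (n:ℝ)+1) :
    Real.log (n.factorial : ℝ) + (x - n) * Real.log (n:ℝ) ≤ Real.log (Real.Gamma (x+1)) := by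
  have hn0 : (0:ℝ) < n := by exact_mod_cast hn
  rcases eq_or_lt_of_le h1 with heq | hlt
  · rw [← heq]
    simp [Real.Gamma_nat_eq_factorial n]
  · have hd : (0:ℝ) < x + 1 - n := by linarith
    have hb0 : (0:ℝ) < 1/(x+1-n) := one_div_pos.mpr hd
    have key := Real.convexOn_log_Gamma.2 (Set.mem_Ioi.mpr hn0)
      (Set.mem_Ioi.mpr (show (0:ℝ) < x+1 by linarith))
      (show (0:ℝ) ≤ (x-(n:ℝ))/(x+1-(n:ℝ)) by exact div_nonneg (by linarith) (by linarith))
      (show (0:ℝ) ≤ 1/(x+1-(n:ℝ)) by exact le_of_lt hb0)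
      (show (x-(n:ℝ))/(x+1-(n:ℝ)) + 1/(x+1-(n:ℝ)) = 1 by field_simp; ring)
    have hx1 : ((x-n)/(x+1-n)) • (n:ℝ) + (1/(x+1-n)) • (x+1) = (n:ℝ)+1 := by
      simp only [smul_eq_mul]; field_simp; ring
    rw [hx1] at key
    have hg1 : Real.Gamma ((n:ℝ)+1) = (n.factorial : ℝ) := Real.Gamma_nat_eq_factorial n
    have hgn : Real.log (n.factorial : ℝ) = Real.log (n:ℝ) + Real.log (Real.Gamma (n:ℝ)) := by
      rw [← hg1, Real.Gamma_add_one (ne_of_gt hn0),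
        Real.log_mul (ne_of_gt hn0) (ne_of_gt (Real.Gamma_pos_of_pos hn0))]
    simp only [Function.comp, smul_eq_mul, hg1] at key
    -- key : log n! ≤ (x-n)/(x+1-n) * log Γ(n) + 1/(x+1-n) * log Γ(x+1)
    rw [hgn] at key ⊢
    have := mul_le_mul_of_nonneg_left key hd.le
    rw [mul_add, mul_add] at this
    have e1 : (x+1-(n:ℝ)) * ((x-n)/(x+1-n) * Real.log (Real.Gamma (n:ℝ))) = (x-n) * Real.log (Real.Gamma (n:ℝ)) := by
      field_simp
    have e2 : (x+1-(n:ℝ)) * (1/(x+1-n) * Real.log (Real.Gamma (x+1))) = Real.log (Real.Gamma (x+1)) := by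
      field_simp
    linarith [this, e1, e2]


lemma aux_gamma_le_one (t : ℝ) (h0 : 0 ≤ t) (h1 : t ≤ 1) :
    Real.log (Real.Gamma (t+1)) ≤ 0 := by
  have key := Real.convexOn_log_Gamma.2 (Set.mem_Ioi.mpr one_pos)
    (Set.mem_Ioi.mpr (show (0:ℝ) < 2 by norm_num))
    (show (0:ℝ) ≤ 1 - t by linarith) (show (0:ℝ) ≤ t by linarith)
    (show (1 - t) + t = 1 by ring)
  have hx : (1-t) • (1:ℝ) + t • (2:ℝ) = t + 1 := by simp only [smul_eq_mul]; ring
  rw [hx] at key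
  simpa [Function.comp, Real.Gamma_one, Real.Gamma_two] using key

lemma aux_gamma_ge (t : ℝ) (h0 : 0 ≤ t) (h1 : t ≤ 1) :
    -Real.log (t+1) ≤ Real.log (Real.Gamma (t+1)) := by
  have ht1 : (0:ℝ) < t + 1 := by linarith
  -- first : 0 ≤ log Γ (t+2)
  have key := Real.convexOn_log_Gamma.2 (Set.mem_Ioi.mpr one_pos)
    (Set.mem_Ioi.mpr (show (0:ℝ) < t+2 by linarith))
    (show (0:ℝ) ≤ t/(t+1) by positivity)
    (show (0:ℝ) ≤ 1/(t+1) by positivity)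
    (show t/(t+1) + 1/(t+1) = 1 by field_simp)
  have hx : (t/(t+1)) • (1:ℝ) + (1/(t+1)) • (t+2) = 2 := by
    simp only [smul_eq_mul]; field_simp; ring
  rw [hx] at key
  simp only [Function.comp, Real.Gamma_one, Real.Gamma_two, Real.log_one, smul_eq_mul,
    mul_zero, zero_add] at key
  -- key : 0 ≤ 1/(t+1) * log Γ(t+2)
  have h2 : (0:ℝ) ≤ Real.log (Real.Gamma (t+2)) := by
    nlinarith [key, one_div_pos.mpr ht1]
  have h3 : Real.Gamma (t+2) = (t+1) * Real.Gamma (t+1) := by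
    have := Real.Gamma_add_one (s := t+1) (ne_of_gt ht1)
    rw [← this]; ring_nf
  rw [h3, Real.log_mul (ne_of_gt ht1) (ne_of_gt (Real.Gamma_pos_of_pos ht1))] at h2
  linarith

lemma aux_log_pi_bounds : 1 ≤ Real.log π ∧ Real.log π ≤ 1.15573 := by
  constructor
  · rw [show (1:ℝ) = Real.log (Real.exp 1) from (Real.log_exp 1).symm]
    exact Real.log_le_log (Real.exp_pos 1) (by nlinarith [Real.exp_one_lt_d9, Real.pi_gt_d6])
  · have h1 : Real.log (π / Real.exp 1) ≤ π / Real.exp 1 - 1 :=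
      Real.log_le_sub_one_of_pos (by positivity)
    rw [Real.log_div (ne_of_gt Real.pi_pos) (Real.exp_ne_zero 1), Real.log_exp] at h1
    have h2 : π / Real.exp 1 ≤ 1.15573 := by
      rw [div_le_iff₀ (Real.exp_pos 1)]
      nlinarith [Real.exp_one_gt_d9, Real.pi_lt_d6]
    linarith




set_option maxHeartbeats 1600000 in
lemma key_up (d : ℕ) (hd : 1 ≤ d) (s : ℝ) (hs0 : 0 < s) (hsd : s ≤ d) :
    Real.log (Real.Gamma (s+1)) ≤ 1/12 + (Real.log 2 + Real.log π + Real.log (s+1))/2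
      + s * Real.log d + d * (1 - (Real.log 2 + Real.log π)/2) - s := by
  have hl2lo := Real.log_two_gt_d9
  have hl2hi := Real.log_two_lt_d9
  obtain ⟨hpilo, hpihi⟩ := aux_log_pi_bounds
  have hc0 : (0:ℝ) ≤ 1 - (Real.log 2 + Real.log π)/2 := by norm_num at hl2hi ⊢; linarith
  have hd1 : (1:ℝ) ≤ d := by exact_mod_cast hd
  by_cases hs1 : s ≤ 1
  · have hg := aux_gamma_le_one s hs0.le hs1
    have h1 : 0 ≤ Real.log (s+1) := Real.log_nonneg (by linarith)
    have h2 : 0 ≤ s * Real.log d := mul_nonneg hs0.le (Real.log_nonneg hd1)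
    have h3 : 1 * (1 - (Real.log 2 + Real.log π)/2) ≤ d * (1 - (Real.log 2 + Real.log π)/2) :=
      mul_le_mul_of_nonneg_right hd1 hc0
    norm_num at hl2hi ⊢
    linarith
  · push_neg at hs1
    obtain ⟨n, hn⟩ : ∃ n : ℕ, n = ⌊s⌋₊ := ⟨_, rfl⟩
    have hn1 : 1 ≤ n := hn ▸ Nat.le_floor (by exact_mod_cast hs1.le)
    have hn0R : (0:ℝ) < n := by exact_mod_cast hn1
    have hn1R : (1:ℝ) ≤ n := by exact_mod_cast hn1
    have hns : (n:ℝ) ≤ s := hn ▸ Nat.floor_le hs0.le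
    have hsn : s < (n:ℝ) + 1 := hn ▸ Nat.lt_floor_add_one s
    have hnd : n ≤ d := by
      have h := Nat.floor_le_floor (R := ℝ) hsd
      rw [hn]; simpa using h
    have hihi := aux_interp_hi n hn1 s hns hsn.le
    have hf2 := (aux_log_fact n hn1).2
    have huv : Real.log (n:ℝ) ≤ Real.log ((n:ℝ)+1) := Real.log_le_log hn0R (by linarith)
    have hlsn : Real.log ((n:ℝ)+1) ≤ Real.log (s+1) := Real.log_le_log (by positivity) (by linarith)
    by_cases hdn : d = n
    · -- then s = n
      have hdRn : ((d:ℝ)) = (n:ℝ) := by exact_mod_cast hdn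
      have hseq : s = (n:ℝ) := le_antisymm (by rw [← hdRn]; exact hsd) hns
      have hnc0 : 1 * (1 - (Real.log 2 + Real.log π)/2) ≤ (n:ℝ) * (1 - (Real.log 2 + Real.log π)/2) :=
        mul_le_mul_of_nonneg_right hn1R hc0
      have e3 : s * Real.log (d:ℝ) = (n:ℝ) * Real.log (n:ℝ) := by rw [hseq, hdRn]
      have e4 : Real.log (s+1) = Real.log ((n:ℝ)+1) := by rw [hseq]
      have e5 : (d:ℝ) * (1 - (Real.log 2 + Real.log π)/2) = (n:ℝ) * (1 - (Real.log 2 + Real.log π)/2) := by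
        rw [hdRn]
      have e6 : (s - (n:ℝ)) * Real.log ((n:ℝ)+1) = 0 := by rw [hseq]; ring
      norm_num at hl2hi ⊢
      linarith
    · have hdn1 : n + 1 ≤ d := by omega
      have hdR : ((n:ℝ)+1) ≤ (d:ℝ) := by exact_mod_cast hdn1
      have hsv : s * Real.log ((n:ℝ)+1) ≤ s * Real.log d :=
        mul_le_mul_of_nonneg_left (Real.log_le_log (by positivity) hdR) hs0.le
      have hdc : ((n:ℝ)+1) * (1 - (Real.log 2 + Real.log π)/2) ≤ d * (1 - (Real.log 2 + Real.log π)/2) :=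
        mul_le_mul_of_nonneg_right hdR hc0
      -- subcases on n
      rcases Nat.lt_or_ge n 3 with hn3 | hn3
      · interval_cases n
        · -- n = 1
          simp only [Nat.cast_one, Nat.factorial_one, Nat.cast_ofNat] at *
          norm_num at hihi hf2 hsv hdc hlsn ⊢
          norm_num at hl2lo
          linarith
        · -- n = 2
          have hlog32 : Real.log (4/3) ≤ 1/3 := by
            have := Real.log_le_sub_one_of_pos (show (0:ℝ) < 4/3 by norm_num)
            linarith
          have hv32 : Real.log ((2:ℝ)+1) - Real.log (2:ℝ) = Real.log 2 - Real.log (4/3) := by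
            rw [show ((2:ℝ)+1) = 2 * 2 / (4/3) by norm_num,
              Real.log_div (by norm_num) (by norm_num), Real.log_mul (by norm_num) (by norm_num)]
            ring
          simp only [Nat.cast_ofNat] at *
          norm_num at hihi hf2 hsv hdc hlsn hv32 ⊢
          norm_num at hl2lo
          linarith
      · -- n ≥ 3
        have hn3R : (3:ℝ) ≤ n := by exact_mod_cast hn3
        have hvu : 1 - ((((n:ℝ)+1)/n)⁻¹) ≤ Real.log (((n:ℝ)+1)/n) :=
          Real.one_sub_inv_le_log_of_pos (by positivity)
        have hvu2 : Real.log (((n:ℝ)+1)/n) = Real.log ((n:ℝ)+1) - Real.log (n:ℝ) :=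
          Real.log_div (by positivity) (by positivity)
        have hinv : ((((n:ℝ)+1)/n)⁻¹) = (n:ℝ)/((n:ℝ)+1) := by
          rw [inv_div]
        have hvu3 : 1/((n:ℝ)+1) ≤ Real.log ((n:ℝ)+1) - Real.log (n:ℝ) := by
          rw [hvu2] at hvu; rw [hinv] at hvu
          have : 1 - (n:ℝ)/((n:ℝ)+1) = 1/((n:ℝ)+1) := by field_simp; ring
          linarith
        have hP1 : ((n:ℝ)+1/2) * (1/((n:ℝ)+1)) ≤ ((n:ℝ)+1/2) * (Real.log ((n:ℝ)+1) - Real.log (n:ℝ)) :=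
          mul_le_mul_of_nonneg_left hvu3 (by linarith)
        have hP2 : (7:ℝ)/8 ≤ ((n:ℝ)+1/2) * (1/((n:ℝ)+1)) := by
          rw [mul_one_div, le_div_iff₀ (by positivity)]
          linarith
        have h4c : (4:ℝ) * (1 - (Real.log 2 + Real.log π)/2) ≤ ((n:ℝ)+1) * (1 - (Real.log 2 + Real.log π)/2) :=
          mul_le_mul_of_nonneg_right (by linarith) hc0
        norm_num at hl2lo hl2hi ⊢
        linarith [hihi, hf2, hsv, hdc, hP1, hP2, h4c, hlsn, hsn, hns]




set_option maxHeartbeats 1600000 in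
lemma key_lo (d : ℕ) (hd : 1 ≤ d) (s : ℝ) (hs0 : 0 < s) (hsd : s ≤ d) :
    -1 + (Real.log 2 + Real.log π + Real.log (s+1))/2
      - d * (Real.log 2 + 1/12 + Real.log π / 2) + s * Real.log d
      < Real.log (Real.Gamma (s+1)) := by
  have hl2lo := Real.log_two_gt_d9
  have hl2hi := Real.log_two_lt_d9
  obtain ⟨hpilo, hpihi⟩ := aux_log_pi_bounds
  have hd1 : (1:ℝ) ≤ d := by exact_mod_cast hd
  have hd0 : (0:ℝ) < d := by linarith
  have hK1 : (1:ℝ) ≤ Real.log 2 + 1/12 + Real.log π / 2 := by norm_num at hl2lo ⊢; linarith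
  by_cases hs1 : s ≤ 1
  · have hg := aux_gamma_ge s hs0.le hs1
    have h1 : Real.log (s+1) ≤ Real.log 2 := Real.log_le_log (by linarith) (by linarith)
    have h2 : s * Real.log d ≤ 1 * Real.log d := mul_le_mul_of_nonneg_right hs1 (Real.log_nonneg hd1)
    have h3 : Real.log (d:ℝ) ≤ (d:ℝ) - 1 := Real.log_le_sub_one_of_pos hd0
    have h4 : (d:ℝ) * 1.2764 ≤ (d:ℝ) * (Real.log 2 + 1/12 + Real.log π / 2) := by
      apply mul_le_mul_of_nonneg_left _ hd0.le
      norm_num at hl2lo ⊢; linarith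
    have h5 : 0 ≤ Real.log (s+1) := Real.log_nonneg (by linarith)
    norm_num at hl2hi h4 ⊢
    linarith
  · push_neg at hs1
    obtain ⟨n, hn⟩ : ∃ n : ℕ, n = ⌊s⌋₊ := ⟨_, rfl⟩
    have hn1 : 1 ≤ n := hn ▸ Nat.le_floor (by exact_mod_cast hs1.le)
    have hn0R : (0:ℝ) < n := by exact_mod_cast hn1
    have hn1R : (1:ℝ) ≤ n := by exact_mod_cast hn1
    have hns : (n:ℝ) ≤ s := hn ▸ Nat.floor_le hs0.le
    have hsn : s < (n:ℝ) + 1 := hn ▸ Nat.lt_floor_add_one s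
    have hnd : n ≤ d := by
      have h := Nat.floor_le_floor (R := ℝ) hsd
      rw [hn]; simpa using h
    have hglo := aux_interp_lo n hn1 s hns hsn.le
    have hf1 := (aux_log_fact n hn1).1
    have huv : Real.log (n:ℝ) ≤ Real.log ((n:ℝ)+1) := Real.log_le_log hn0R (by linarith)
    by_cases hdn : d = n
    · have hdRn : ((d:ℝ)) = (n:ℝ) := by exact_mod_cast hdn
      have hseq : s = (n:ℝ) := le_antisymm (by rw [← hdRn]; exact hsd) hns
      have e3 : s * Real.log (d:ℝ) = (n:ℝ) * Real.log (n:ℝ) := by rw [hseq, hdRn]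
      have e4 : Real.log (s+1) = Real.log ((n:ℝ)+1) := by rw [hseq]
      have e5 : (d:ℝ) * (Real.log 2 + 1/12 + Real.log π / 2) = (n:ℝ) * (Real.log 2 + 1/12 + Real.log π / 2) := by
        rw [hdRn]
      have e6 : (s - (n:ℝ)) * Real.log (n:ℝ) = 0 := by rw [hseq]; ring
      have hv2 : Real.log ((n:ℝ)+1) ≤ Real.log 2 + Real.log (n:ℝ) := by
        rw [← Real.log_mul (by norm_num) (ne_of_gt hn0R)]
        exact Real.log_le_log (by linarith) (by linarith)
      have h6 : (n:ℝ) * 1 ≤ (n:ℝ) * (Real.log 2 + 1/12 + Real.log π / 2) :=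
        mul_le_mul_of_nonneg_left hK1 hn0R.le
      norm_num at hl2hi ⊢
      linarith
    · have hdn1 : n + 1 ≤ d := by omega
      have hdR : ((n:ℝ)+1) ≤ (d:ℝ) := by exact_mod_cast hdn1
      have hA1 : Real.log ((d:ℝ)/((n:ℝ)+1)) ≤ (d:ℝ)/((n:ℝ)+1) - 1 :=
        Real.log_le_sub_one_of_pos (by positivity)
      have hA2 : Real.log ((d:ℝ)/((n:ℝ)+1)) = Real.log (d:ℝ) - Real.log ((n:ℝ)+1) :=
        Real.log_div (ne_of_gt hd0) (by positivity)
      have hA3 : s * Real.log (d:ℝ) ≤ s * (Real.log ((n:ℝ)+1) + ((d:ℝ)/((n:ℝ)+1) - 1)) :=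
        mul_le_mul_of_nonneg_left (by linarith) hs0.le
      have hz0 : (0:ℝ) ≤ (d:ℝ)/((n:ℝ)+1) - 1 := by
        rw [sub_nonneg, le_div_iff₀ (by positivity)]; linarith
      have hA4 : s * ((d:ℝ)/((n:ℝ)+1) - 1) ≤ ((n:ℝ)+1) * ((d:ℝ)/((n:ℝ)+1) - 1) :=
        mul_le_mul_of_nonneg_right hsn.le hz0
      have hA5 : ((n:ℝ)+1) * ((d:ℝ)/((n:ℝ)+1) - 1) = (d:ℝ) - ((n:ℝ)+1) := by field_simp
      have hA6 : ((d:ℝ) - ((n:ℝ)+1)) * 1 ≤ ((d:ℝ)-((n:ℝ)+1)) * (Real.log 2 + 1/12 + Real.log π/2) :=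
        mul_le_mul_of_nonneg_left hK1 (by linarith)
      have hsA3 : s * (Real.log ((n:ℝ)+1) + ((d:ℝ)/((n:ℝ)+1) - 1))
          = s * Real.log ((n:ℝ)+1) + s * ((d:ℝ)/((n:ℝ)+1) - 1) := by ring
      rcases Nat.lt_or_ge n 2 with hn2 | hn2
      · -- n = 1
        have hne : n = 1 := by omega
        rw [hne] at hglo hf1 hns hsn
        have hglo' : (0:ℝ) ≤ Real.log (Real.Gamma (s+1)) := by
          simpa using hglo
        have hs2 : s ≤ 2 := by push_cast at hsn; linarith
        have hld : Real.log (d:ℝ) ≤ Real.log 2 + ((d:ℝ)/2 - 1) := by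
          have h := Real.log_le_sub_one_of_pos (show (0:ℝ) < (d:ℝ)/2 by positivity)
          have e : Real.log ((d:ℝ)/2) = Real.log (d:ℝ) - Real.log 2 :=
            Real.log_div (ne_of_gt hd0) (by norm_num)
          linarith
        have hsld : s * Real.log (d:ℝ) ≤ 2 * Real.log (d:ℝ) :=
          mul_le_mul_of_nonneg_right hs2 (Real.log_nonneg hd1)
        have hdd : (d:ℝ) * 1.2764 ≤ (d:ℝ) * (Real.log 2 + 1/12 + Real.log π / 2) := by
          apply mul_le_mul_of_nonneg_left _ hd0.le
          norm_num at hl2lo ⊢; linarith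
        have hv32 : Real.log (3/2 : ℝ) ≤ 1/2 := by
          have := Real.log_le_sub_one_of_pos (show (0:ℝ) < 3/2 by norm_num)
          linarith
        have hlog3 : Real.log (s+1) ≤ Real.log 2 + Real.log (3/2 : ℝ) := by
          rw [← Real.log_mul (by norm_num) (by norm_num)]
          exact Real.log_le_log (by linarith) (by linarith)
        norm_num at hl2hi hdd ⊢
        linarith
      · -- n ≥ 2
        have hn2R : (2:ℝ) ≤ n := by exact_mod_cast hn2
        have hB1 : Real.log (((n:ℝ)+1)/n) ≤ 1/(n:ℝ) := by
          have h := Real.log_le_sub_one_of_pos (show (0:ℝ) < ((n:ℝ)+1)/n by positivity)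
          have : ((n:ℝ)+1)/n - 1 = 1/(n:ℝ) := by field_simp; ring
          linarith
        have hB2 : Real.log (((n:ℝ)+1)/n) = Real.log ((n:ℝ)+1) - Real.log (n:ℝ) :=
          Real.log_div (by positivity) (ne_of_gt hn0R)
        have hB3 : s * (Real.log ((n:ℝ)+1) - Real.log (n:ℝ)) ≤ ((n:ℝ)+1) * (Real.log ((n:ℝ)+1) - Real.log (n:ℝ)) :=
          mul_le_mul_of_nonneg_right hsn.le (by linarith)
        have hB4 : ((n:ℝ)+1) * (Real.log ((n:ℝ)+1) - Real.log (n:ℝ)) ≤ ((n:ℝ)+1) * (1/(n:ℝ)) :=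
          mul_le_mul_of_nonneg_left (by linarith) (by positivity)
        have hB5 : ((n:ℝ)+1) * (1/(n:ℝ)) = 1 + 1/(n:ℝ) := by field_simp
        have hC1 : Real.log (((n:ℝ)+2)/n) ≤ 2/(n:ℝ) := by
          have h := Real.log_le_sub_one_of_pos (show (0:ℝ) < ((n:ℝ)+2)/n by positivity)
          have : ((n:ℝ)+2)/n - 1 = 2/(n:ℝ) := by field_simp; ring
          linarith
        have hC2 : Real.log (((n:ℝ)+2)/n) = Real.log ((n:ℝ)+2) - Real.log (n:ℝ) :=
          Real.log_div (by positivity) (ne_of_gt hn0R)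
        have hC3 : Real.log (s+1) ≤ Real.log ((n:ℝ)+2) := Real.log_le_log (by linarith) (by linarith)
        have hD1 : ((n:ℝ)+1) * 1.2764 ≤ ((n:ℝ)+1) * (Real.log 2 + 1/12 + Real.log π/2) := by
          apply mul_le_mul_of_nonneg_left _ (by positivity)
          norm_num at hl2lo ⊢; linarith
        have hE1 : 1/(n:ℝ) ≤ 1/2 := one_div_le_one_div_of_le (by norm_num) hn2R
        have hE2 : 2/(n:ℝ) ≤ 1 := by
          rw [show (2:ℝ)/(n:ℝ) = 2*(1/(n:ℝ)) by ring]; linarith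
        norm_num at hl2hi hD1 ⊢
        linarith




theorem statement19 (d : ℕ) (hd : 1 ≤ d) (p : ℝ) (hp : 1 ≤ p) (vol : ℝ)
    (hvol : vol = (2 * Real.Gamma (1 / p + 1)) ^ d / Real.Gamma ((d : ℝ) / p + 1)) :
    (Real.exp 1)⁻¹ * Real.sqrt (2 * Real.pi * ((d : ℝ) / p + 1)) *
          (1 / (4 * Real.exp (1 / 12) * Real.sqrt Real.pi)) ^ d *
          (d : ℝ) ^ ((d : ℝ) / p)
        < vol⁻¹ ∧
      vol⁻¹
        < Real.exp (1 / 12) * Real.sqrt (2 * Real.pi * ((d : ℝ) / p + 1)) *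
            (Real.exp 1 / (2 * Real.sqrt (2 * Real.pi))) ^ d *
            (d : ℝ) ^ ((d : ℝ) / p) := by
  have hp0 : (0:ℝ) < p := by linarith
  have hd1 : (1:ℝ) ≤ (d:ℝ) := by exact_mod_cast hd
  have hd0 : (0:ℝ) < (d:ℝ) := by linarith
  have ht0 : (0:ℝ) < 1/p := by positivity
  have ht1 : 1/p ≤ 1 := by rw [div_le_one hp0]; exact hp
  have hs0 : (0:ℝ) < (d:ℝ)/p := by positivity
  have hsd : (d:ℝ)/p ≤ (d:ℝ) := div_le_self hd0.le hp
  have hG1 : 0 < Real.Gamma (1/p+1) := Real.Gamma_pos_of_pos (by linarith)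
  have hGs : 0 < Real.Gamma ((d:ℝ)/p+1) := Real.Gamma_pos_of_pos (by linarith)
  have h2G : (0:ℝ) < (2 * Real.Gamma (1/p+1))^d := by positivity
  have hvinv : vol⁻¹ = Real.Gamma ((d:ℝ)/p+1) / (2 * Real.Gamma (1/p+1))^d := by
    rw [hvol, inv_div]
  have hvpos : 0 < vol⁻¹ := by rw [hvinv]; positivity
  have hlogv : Real.log (vol⁻¹)
      = Real.log (Real.Gamma ((d:ℝ)/p+1)) - d * Real.log (2 * Real.Gamma (1/p+1)) := by
    rw [hvinv, Real.log_div (ne_of_gt hGs) (ne_of_gt h2G), Real.log_pow]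
  have hlog2G : Real.log (2 * Real.Gamma (1/p+1)) = Real.log 2 + Real.log (Real.Gamma (1/p+1)) :=
    Real.log_mul (by norm_num) (ne_of_gt hG1)
  -- bounds on d * log(2 Γ(1/p+1))
  have hup2G : Real.log 2 - 1/p < Real.log (2 * Real.Gamma (1/p+1)) := by
    have h1 := aux_gamma_ge (1/p) ht0.le ht1
    have h2 : Real.log (1/p+1) < 1/p := by
      have := Real.log_lt_sub_one_of_pos (show (0:ℝ) < 1/p+1 by linarith)
        (show (1:ℝ)/p+1 ≠ 1 by intro h; nlinarith)
      linarith
    rw [hlog2G]; linarith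
  have hlo2G : Real.log (2 * Real.Gamma (1/p+1)) ≤ Real.log 2 := by
    have h1 := aux_gamma_le_one (1/p) ht0.le ht1
    rw [hlog2G]; linarith
  have hdup : (d:ℝ) * (Real.log 2 - 1/p) < (d:ℝ) * Real.log (2 * Real.Gamma (1/p+1)) :=
    (mul_lt_mul_iff_right₀ hd0).mpr hup2G
  have hdlo : (d:ℝ) * Real.log (2 * Real.Gamma (1/p+1)) ≤ (d:ℝ) * Real.log 2 :=
    mul_le_mul_of_nonneg_left hlo2G hd0.le
  have hds : (d:ℝ) * (1/p) = (d:ℝ)/p := by ring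
  -- log of RHS upper
  have hsq : Real.log (Real.sqrt (2 * π * ((d:ℝ)/p+1)))
      = (Real.log 2 + Real.log π + Real.log ((d:ℝ)/p+1))/2 := by
    rw [Real.log_sqrt (by positivity), Real.log_mul (by positivity) (by positivity),
      Real.log_mul (by norm_num) (ne_of_gt Real.pi_pos)]
  have hrp : Real.log ((d:ℝ) ^ ((d:ℝ)/p)) = ((d:ℝ)/p) * Real.log d := Real.log_rpow hd0 _
  have hUpos : 0 < Real.exp (1/12) * Real.sqrt (2 * π * ((d:ℝ)/p+1)) *
      (Real.exp 1 / (2 * Real.sqrt (2*π)))^d * (d:ℝ) ^ ((d:ℝ)/p) := by positivity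
  have hLpos : 0 < (Real.exp 1)⁻¹ * Real.sqrt (2 * π * ((d:ℝ)/p+1)) *
      (1 / (4 * Real.exp (1/12) * Real.sqrt π))^d * (d:ℝ) ^ ((d:ℝ)/p) := by positivity
  have hlogU : Real.log (Real.exp (1/12) * Real.sqrt (2 * π * ((d:ℝ)/p+1)) *
      (Real.exp 1 / (2 * Real.sqrt (2*π)))^d * (d:ℝ) ^ ((d:ℝ)/p))
      = 1/12 + (Real.log 2 + Real.log π + Real.log ((d:ℝ)/p+1))/2
        + (d:ℝ) * (1 - Real.log 2 - (Real.log 2 + Real.log π)/2) + ((d:ℝ)/p) * Real.log d := by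
    rw [Real.log_mul (by positivity) (by positivity), Real.log_mul (by positivity) (by positivity),
      Real.log_mul (by positivity) (by positivity), Real.log_exp, hsq, hrp, Real.log_pow,
      Real.log_div (Real.exp_ne_zero 1) (by positivity), Real.log_exp,
      Real.log_mul (by norm_num) (by positivity), Real.log_sqrt (by positivity),
      Real.log_mul (by norm_num) (ne_of_gt Real.pi_pos)]
    ring
  have hc1 : Real.log (1/(4*Real.exp (1/12)*Real.sqrt π)) = -(2*Real.log 2 + 1/12 + Real.log π/2) := by
    rw [one_div, Real.log_inv, Real.log_mul (by positivity) (by positivity),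
      Real.log_mul (by norm_num) (Real.exp_ne_zero _), Real.log_exp, Real.log_sqrt Real.pi_pos.le,
      show (4:ℝ) = 2^(2:ℕ) by norm_num, Real.log_pow]
    push_cast; ring
  have hlogL : Real.log ((Real.exp 1)⁻¹ * Real.sqrt (2 * π * ((d:ℝ)/p+1)) *
      (1 / (4 * Real.exp (1/12) * Real.sqrt π))^d * (d:ℝ) ^ ((d:ℝ)/p))
      = -1 + (Real.log 2 + Real.log π + Real.log ((d:ℝ)/p+1))/2
        - (d:ℝ) * (2 * Real.log 2 + 1/12 + Real.log π / 2) + ((d:ℝ)/p) * Real.log d := by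
    rw [Real.log_mul (by positivity) (by positivity), Real.log_mul (by positivity) (by positivity),
      Real.log_mul (by positivity) (by positivity), Real.log_inv, Real.log_exp, hsq, hrp,
      Real.log_pow, hc1]
    ring
  constructor
  · rw [← Real.exp_log hLpos, ← Real.exp_log hvpos]
    apply Real.exp_lt_exp.mpr
    rw [hlogL, hlogv]
    have hk := key_lo d hd ((d:ℝ)/p) hs0 hsd
    linarith
  · rw [← Real.exp_log hvpos, ← Real.exp_log hUpos]
    apply Real.exp_lt_exp.mpr
    rw [hlogU, hlogv]
    have hk := key_up d hd ((d:ℝ)/p) hs0 hsd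
    have hds' : (d:ℝ) * (Real.log 2 - 1/p) = (d:ℝ) * Real.log 2 - (d:ℝ)/p := by ring
    linarith
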